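/- Recovery of the minimal-angle axis: with n₀, k unit vectors, cos υ = (n₀,k), sin υ > 0, ω ∈ (0,π) with 1 − sin²υ sin²(ω/2) > 0, define k₀^i = [k^i cos(ω/2) − (n₀^i cos(ω/2) + n₀^j k^l ε_{lj}^i sin(ω/2)) cos υ] / (sin υ √(1 − sin²υ sin²(ω/2))). Then k₀ is a unit vector orthogonal to n₀. -/

import Mathlib

open Matrix Real

/-- Levi-Civita tensor on `Fin 3`, with `eps 0 1 2 = 1`. -/
noncomputable def eps (i j l : Fin 3) : ℝ :=
  if (i = 0 ∧ j = 1 ∧ l = 2) ∨ (i = 1 ∧ j = 2 ∧ l = 0) ∨ (i = 2 ∧ j = 0 ∧ l = 1) then 1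
  else if (i = 0 ∧ j = 2 ∧ l = 1) ∨ (i = 2 ∧ j = 1 ∧ l = 0) ∨ (i = 1 ∧ j = 0 ∧ l = 2) then -1
  else 0

/-- Rotation matrix `S_i{}^j = δ_i^j cos ω + k^l ε_{li}{}^j sin ω + k_i k^j (1 - cos ω)`. -/
noncomputable def rot (ω : ℝ) (k : Fin 3 → ℝ) : Matrix (Fin 3) (Fin 3) ℝ :=
  Matrix.of fun i j : Fin 3 =>
    (if i = j then Real.cos ω else 0) + (∑ l, k l * eps l i j) * Real.sin ω
      + k i * k j * (1 - Real.cos ω)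

set_option maxHeartbeats 2000000 in
theorem recovered_axis_unit_orth (n₀ k : Fin 3 → ℝ)
    (hn₀ : ∑ i, n₀ i * n₀ i = 1) (hk : ∑ i, k i * k i = 1)
    (υ : ℝ) (hcosυ : Real.cos υ = ∑ i, n₀ i * k i) (hsinυ : 0 < Real.sin υ)
    (ω : ℝ) (hω : ω ∈ Set.Ioo 0 Real.pi)
    (hpos : 0 < 1 - Real.sin υ ^ 2 * Real.sin (ω / 2) ^ 2)
    (k₀ : Fin 3 → ℝ)
    (hk₀ : ∀ i, k₀ i = (k i * Real.cos (ω / 2) -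
        (n₀ i * Real.cos (ω / 2) + (∑ j, ∑ l, n₀ j * k l * eps l j i) * Real.sin (ω / 2)) *
          Real.cos υ) /
      (Real.sin υ * Real.sqrt (1 - Real.sin υ ^ 2 * Real.sin (ω / 2) ^ 2))) :
    ∑ i, k₀ i * k₀ i = 1 ∧ ∑ i, n₀ i * k₀ i = 0 := by
  have hw0 : (∑ j, ∑ l, n₀ j * k l * eps l j 0) = n₀ 2 * k 1 - n₀ 1 * k 2 := by
    simp [Fin.sum_univ_three, eps]; ring
  have hw1 : (∑ j, ∑ l, n₀ j * k l * eps l j 1) = n₀ 0 * k 2 - n₀ 2 * k 0 := by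
    simp [Fin.sum_univ_three, eps]; ring
  have hw2 : (∑ j, ∑ l, n₀ j * k l * eps l j 2) = n₀ 1 * k 0 - n₀ 0 * k 1 := by
    simp [Fin.sum_univ_three, eps]; ring
  have hn' : n₀ 0 * n₀ 0 + n₀ 1 * n₀ 1 + n₀ 2 * n₀ 2 = 1 := by
    simpa [Fin.sum_univ_three] using hn₀
  have hk' : k 0 * k 0 + k 1 * k 1 + k 2 * k 2 = 1 := by
    simpa [Fin.sum_univ_three] using hk
  have hcos' : Real.cos υ = n₀ 0 * k 0 + n₀ 1 * k 1 + n₀ 2 * k 2 := by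
    simpa [Fin.sum_univ_three] using hcosυ
  have hpy1 : Real.sin (ω / 2) ^ 2 + Real.cos (ω / 2) ^ 2 = 1 := Real.sin_sq_add_cos_sq _
  have hpy2 : Real.sin υ ^ 2 + Real.cos υ ^ 2 = 1 := Real.sin_sq_add_cos_sq _
  set c := Real.cos (ω / 2) with hc
  set s := Real.sin (ω / 2) with hs
  set cv := Real.cos υ with hcv
  set sv := Real.sin υ with hsv
  set D := 1 - sv ^ 2 * s ^ 2 with hD
  have hr : Real.sqrt D * Real.sqrt D = D := Real.mul_self_sqrt hpos.le
  have hApos : 0 < sv * Real.sqrt D := mul_pos hsinυ (Real.sqrt_pos.mpr hpos)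
  have hA : sv * Real.sqrt D ≠ 0 := ne_of_gt hApos
  constructor
  · rw [Fin.sum_univ_three]
    simp only [hk₀, hw0, hw1, hw2]
    rw [div_mul_div_comm, div_mul_div_comm, div_mul_div_comm, ← add_div,
      ← add_div, div_eq_one_iff_eq (by positivity)]
    rw [show (sv * Real.sqrt D) * (sv * Real.sqrt D) = sv ^ 2 * D by
      rw [mul_mul_mul_comm, hr]; ring]
    linear_combination (c ^ 2 + s ^ 2 * cv ^ 2) * hk' +
      (c ^ 2 * cv ^ 2 + s ^ 2 * cv ^ 2 * (k 0 * k 0 + k 1 * k 1 + k 2 * k 2)) * hn' +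
      (2 * c ^ 2 * cv + s ^ 2 * cv ^ 2 * (cv + (n₀ 0 * k 0 + n₀ 1 * k 1 + n₀ 2 * k 2))) * hcos' +
      (1 - cv ^ 2) * hpy1 +
      (2 * s ^ 2 * (1 - cv ^ 2) + s ^ 2 * (sv ^ 2 + cv ^ 2 - 1) - 1) * hpy2
  · rw [Fin.sum_univ_three]
    simp only [hk₀, hw0, hw1, hw2]
    rw [← mul_div_assoc, ← mul_div_assoc, ← mul_div_assoc, ← add_div, ← add_div]
    rw [div_eq_zero_iff]
    left
    linear_combination (-c) * hcos' + (-(c * cv)) * hn'
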